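/- For all natural numbers m, n with m ≥ 2 and n ≥ 2, the complete bipartite graph K_{m,n} admits a modulo-3-orientation. -/

import Mathlib

/-- A finite multigraph: an edge type `E` whose elements have two (not necessarily
distinct) endpoints in `V`, given by `fst` and `snd` (a reference ordering). -/
structure Multigraph (V E : Type) where
  fst : E → V
  snd : E → V

namespace Multigraph

variable {V E : Type}

/-- Under orientation `o`, the tail (source) of edge `e`:
if `o e = true` the edge is oriented `fst e → snd e`, otherwise reversed. -/
def tail (G : Multigraph V E) (o : E → Bool) (e : E) : V :=
  if o e then G.fst e else G.snd e

/-- Under orientation `o`, the head (target) of edge `e`. -/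
def head (G : Multigraph V E) (o : E → Bool) (e : E) : V :=
  if o e then G.snd e else G.fst e

open Classical in
/-- The excess (out-degree minus in-degree) of `v` counting only edges in `A`. -/
noncomputable def excOn (G : Multigraph V E) [Fintype E] (A : Finset E)
    (o : E → Bool) (v : V) : ℤ :=
  ((A.filter fun e => G.tail o e = v).card : ℤ) -
    ((A.filter fun e => G.head o e = v).card : ℤ)

/-- The excess `d⁺(v) - d⁻(v)` of `v` under orientation `o`. -/
noncomputable def exc (G : Multigraph V E) [Fintype E] (o : E → Bool) (v : V) : ℤ :=
  G.excOn Finset.univ o v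

/-- `o` is a modulo-3-orientation: every excess is divisible by 3. -/
def Mod3Orientation (G : Multigraph V E) [Fintype E] (o : E → Bool) : Prop :=
  ∀ v, (3 : ℤ) ∣ G.exc o v

/-- `G` admits a modulo-3-orientation. -/
def Mod3Orientable (G : Multigraph V E) [Fintype E] : Prop :=
  ∃ o, G.Mod3Orientation o

open Classical in
/-- Degree of a vertex (loops counted with multiplicity 2). -/
noncomputable def deg (G : Multigraph V E) [Fintype E] (v : V) : ℕ :=
  (Finset.univ.filter fun e => G.fst e = v).card +
    (Finset.univ.filter fun e => G.snd e = v).card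

open Classical in
/-- `G` has a nowhere-zero 3-flow: an orientation together with nonzero `ZMod 3`
values on the edges satisfying Kirchhoff's law at every vertex. -/
def HasNZ3Flow (G : Multigraph V E) [Fintype E] : Prop :=
  ∃ (o : E → Bool) (f : E → ZMod 3), (∀ e, f e ≠ 0) ∧
    ∀ v, (∑ e ∈ Finset.univ.filter (fun e => G.head o e = v), f e) =
         (∑ e ∈ Finset.univ.filter (fun e => G.tail o e = v), f e)

/-- `u` and `w` are joined by an edge belonging to the set `s`. -/
def Adj (G : Multigraph V E) (s : Set E) (u w : V) : Prop :=
  ∃ e ∈ s, (G.fst e = u ∧ G.snd e = w) ∨ (G.fst e = w ∧ G.snd e = u)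

/-- Number of connected components of the spanning subgraph with edge set `s`. -/
noncomputable def numComponents (G : Multigraph V E) (s : Set E) : ℕ :=
  Nat.card (Quot (G.Adj s))

end Multigraph

/-- The complete bipartite graph `K_{m,n}`. -/
def Kmn (m n : ℕ) : Multigraph (Fin m ⊕ Fin n) (Fin m × Fin n) :=
  ⟨fun p => Sum.inl p.1, fun p => Sum.inr p.2⟩

section aux

lemma card_filter_lt_fin (a n : ℕ) (h : a ≤ n) :
    (Finset.univ.filter fun j : Fin n => j.val < a).card = a := by
  rw [← Finset.card_range a]
  apply Finset.card_nbij (fun j => j.val)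
  · intro x hx; simp_all
  · intro x hx y hy hxy; exact Fin.ext hxy
  · intro x hx
    simp only [Finset.mem_coe, Finset.mem_range] at hx
    exact ⟨⟨x, lt_of_lt_of_le hx h⟩, by simp [hx], rfl⟩

lemma count_fst {m n : ℕ} (i : Fin m) (Q : Fin m × Fin n → Prop) [DecidablePred Q] :
    (Finset.univ.filter fun p : Fin m × Fin n => Q p ∧ p.1 = i).card
      = (Finset.univ.filter fun j : Fin n => Q (i, j)).card := by
  apply Finset.card_nbij' (fun p => p.2) (fun j => (i, j)) <;>
    simp +contextual [Prod.ext_iff, Set.MapsTo, Set.LeftInvOn, Set.RightInvOn, Set.EqOn] <;> intros <;> simp_all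

lemma count_snd {m n : ℕ} (j : Fin n) (Q : Fin m × Fin n → Prop) [DecidablePred Q] :
    (Finset.univ.filter fun p : Fin m × Fin n => Q p ∧ p.2 = j).card
      = (Finset.univ.filter fun i : Fin m => Q (i, j)).card := by
  apply Finset.card_nbij' (fun p => p.1) (fun i => (i, j)) <;>
    simp +contextual [Prod.ext_iff, Set.MapsTo, Set.LeftInvOn, Set.RightInvOn, Set.EqOn] <;> intros <;> simp_all

lemma exc_eq {V E : Type} [Fintype E] (G : Multigraph V E) (o : E → Bool) (v : V)
    (P Q : E → Prop) [DecidablePred P] [DecidablePred Q]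
    (hP : ∀ e, G.tail o e = v ↔ P e) (hQ : ∀ e, G.head o e = v ↔ Q e) :
    G.exc o v = ((Finset.univ.filter P).card : ℤ) - ((Finset.univ.filter Q).card : ℤ) := by
  classical
  unfold Multigraph.exc Multigraph.excOn
  rw [Finset.filter_congr (fun x _ => hP x), Finset.filter_congr (fun x _ => hQ x)]

end aux

/-- For `m, n ≥ 2`, `K_{m,n}` admits a modulo-3-orientation. -/
theorem stmt_2 (m n : ℕ) (hm : 2 ≤ m) (hn : 2 ≤ n) : (Kmn m n).Mod3Orientable := by
  classical
  set a := 2 * n % 3 with ha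
  set b := 2 * m % 3 with hb
  have han : a ≤ n := le_trans (Nat.le_of_lt_succ (Nat.mod_lt _ (by norm_num))) hn
  have hbm : b ≤ m := le_trans (Nat.le_of_lt_succ (Nat.mod_lt _ (by norm_num))) hm
  refine ⟨fun p => decide (p.1.val < b) == decide (p.2.val < a), ?_⟩
  set o : Fin m × Fin n → Bool := fun p => decide (p.1.val < b) == decide (p.2.val < a) with ho
  have otrue : ∀ p, o p = true ↔ (p.1.val < b ↔ p.2.val < a) := by
    intro p; rw [ho]; simp only [beq_iff_eq, decide_eq_decide]
  intro v
  cases v with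
  | inl i =>
    have htail : ∀ e : Fin m × Fin n, (Kmn m n).tail o e = Sum.inl i ↔ (o e = true ∧ e.1 = i) := by
      intro e
      unfold Multigraph.tail Kmn
      rcases h : o e <;> simp [h]
    have hhead : ∀ e : Fin m × Fin n, (Kmn m n).head o e = Sum.inl i ↔ (¬ (o e = true) ∧ e.1 = i) := by
      intro e
      unfold Multigraph.head Kmn
      rcases h : o e <;> simp [h]
    rw [exc_eq _ _ _ _ _ htail hhead, count_fst i (fun e => o e = true),
      count_fst i (fun e => ¬ (o e = true))]
    set kt := (Finset.univ.filter fun j : Fin n => o (i, j) = true).card with hkt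
    set kf := (Finset.univ.filter fun j : Fin n => ¬ (o (i, j) = true)).card with hkf
    have hsum : kt + kf = n := by
      rw [hkt, hkf, Finset.card_filter_add_card_filter_not, Finset.card_univ,
        Fintype.card_fin]
    by_cases hib : i.val < b
    · have : kt = a := by
        rw [hkt, ← card_filter_lt_fin a n han]
        congr 1
        apply Finset.filter_congr; intro j _
        simp [otrue, hib]
      omega
    · have : kf = a := by
        rw [hkf, ← card_filter_lt_fin a n han]
        congr 1
        apply Finset.filter_congr; intro j _
        simp [otrue, hib]
      omega
  | inr j =>
    have htail : ∀ e : Fin m × Fin n, (Kmn m n).tail o e = Sum.inr j ↔ (¬ (o e = true) ∧ e.2 = j) := by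
      intro e
      unfold Multigraph.tail Kmn
      rcases h : o e <;> simp [h]
    have hhead : ∀ e : Fin m × Fin n, (Kmn m n).head o e = Sum.inr j ↔ (o e = true ∧ e.2 = j) := by
      intro e
      unfold Multigraph.head Kmn
      rcases h : o e <;> simp [h]
    rw [exc_eq _ _ _ _ _ htail hhead, count_snd j (fun e => ¬ (o e = true)),
      count_snd j (fun e => o e = true)]
    set kt := (Finset.univ.filter fun i : Fin m => o (i, j) = true).card with hkt
    set kf := (Finset.univ.filter fun i : Fin m => ¬ (o (i, j) = true)).card with hkf
    have hsum : kt + kf = m := by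
      rw [hkt, hkf, Finset.card_filter_add_card_filter_not, Finset.card_univ,
        Fintype.card_fin]
    by_cases hja : j.val < a
    · have : kt = b := by
        rw [hkt, ← card_filter_lt_fin b m hbm]
        congr 1
        apply Finset.filter_congr; intro i _
        simp [otrue, hja]
      omega
    · have : kf = b := by
        rw [hkf, ← card_filter_lt_fin b m hbm]
        congr 1
        apply Finset.filter_congr; intro i _
        simp [otrue, hja]
      omega
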